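/- Let K be an algebraically closed field and let V and W be nonzero finite-dimensional K-vector spaces. Let S be a K-linear endomorphism of V and T a K-linear endomorphism of W. Then the set of eigenvalues of the endomorphism S ⊗ T of the tensor product V ⊗_K W is exactly the set { a·b : a is an eigenvalue of S and b is an eigenvalue of T }. -/

import Mathlib

set_option maxHeartbeats 1000000
set_option synthInstance.maxHeartbeats 400000

open TensorProduct Module

section aux

variable {K : Type*} [Field K]
    {V W : Type*} [AddCommGroup V] [Module K V] [AddCommGroup W] [Module K W]

lemma aux_tmul_ne_zero {v : V} {w : W} (hv : v ≠ 0) (hw : w ≠ 0) :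
    v ⊗ₜ[K] w ≠ 0 := by
  let bV := Basis.extend (LinearIndepOn.singleton (R := K) (v := id) hv)
  let bW := Basis.extend (LinearIndepOn.singleton (R := K) (v := id) hw)
  have hv' : v ∈ (LinearIndepOn.singleton (R := K) (v := id) hv).extend
      (Set.subset_univ _) := (LinearIndepOn.singleton (R := K) (v := id) hv).subset_extend _ rfl
  have hw' : w ∈ (LinearIndepOn.singleton (R := K) (v := id) hw).extend
      (Set.subset_univ _) := (LinearIndepOn.singleton (R := K) (v := id) hw).subset_extend _ rfl
  have : (bV.tensorProduct bW) (⟨v, hv'⟩, ⟨w, hw'⟩) = v ⊗ₜ[K] w := by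
    rw [Basis.tensorProduct_apply]
    simp [bV, bW, Basis.extend_apply_self]
  rw [← this]
  exact Basis.ne_zero _ _

/-- If `f.rTensor W` kills a nonzero vector, then `f` has nontrivial kernel;
in particular `a` is an eigenvalue of `S` if `(S - a) ⊗ 1` is not injective. -/
lemma aux_hasEigenvalue_left {S : Module.End K V} {a : K} {u : TensorProduct K V W}
    (hu : u ≠ 0) (h : LinearMap.rTensor W ((S : V →ₗ[K] V) - a • LinearMap.id) u = 0) :
    S.HasEigenvalue a := by
  rw [Module.End.hasEigenvalue_iff]
  intro hbot
  have hker : LinearMap.ker ((S : V →ₗ[K] V) - a • LinearMap.id) = ⊥ := by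
    rw [← hbot]
    ext x
    simp [Module.End.mem_eigenspace_iff, sub_eq_zero]
  have hinj := Module.Flat.rTensor_preserves_injective_linearMap
    (M := W) ((S : V →ₗ[K] V) - a • LinearMap.id) (LinearMap.ker_eq_bot.mp hker)
  exact hu (hinj (by simpa using h))

lemma aux_hasEigenvalue_right {T : Module.End K W} {b : K} {u : TensorProduct K V W}
    (hu : u ≠ 0) (h : LinearMap.lTensor V ((T : W →ₗ[K] W) - b • LinearMap.id) u = 0) :
    T.HasEigenvalue b := by
  rw [Module.End.hasEigenvalue_iff]
  intro hbot
  have hker : LinearMap.ker ((T : W →ₗ[K] W) - b • LinearMap.id) = ⊥ := by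
    rw [← hbot]
    ext x
    simp [Module.End.mem_eigenspace_iff, sub_eq_zero]
  have hinj := Module.Flat.lTensor_preserves_injective_linearMap
    (M := V) ((T : W →ₗ[K] W) - b • LinearMap.id) (LinearMap.ker_eq_bot.mp hker)
  exact hu (hinj (by simpa using h))

end aux

/-- Over an algebraically closed field `K`, the eigenvalues of `S ⊗ T` on `V ⊗ W`
(for nonzero finite-dimensional `V`, `W`) are exactly the products of an eigenvalue of `S`
with an eigenvalue of `T`. -/
theorem eigenvalues_tensorProduct
    (K : Type*) [Field K] [IsAlgClosed K]
    (V W : Type*) [AddCommGroup V] [Module K V] [AddCommGroup W] [Module K W]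
    [FiniteDimensional K V] [FiniteDimensional K W] [Nontrivial V] [Nontrivial W]
    (S : Module.End K V) (T : Module.End K W) :
    {μ : K | Module.End.HasEigenvalue
        (M := TensorProduct K V W) (TensorProduct.map S T) μ} =
      {μ : K | ∃ a b : K, S.HasEigenvalue a ∧ T.HasEigenvalue b ∧ μ = a * b} := by
  ext μ
  simp only [Set.mem_setOf_eq]
  constructor
  · -- hard direction
    intro hμ
    -- the two commuting operators S ⊗ 1 and 1 ⊗ T
    set A : Module.End K (TensorProduct K V W) := TensorProduct.map S 1 with hA
    set B : Module.End K (TensorProduct K V W) := TensorProduct.map 1 T with hB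
    set C : Module.End K (TensorProduct K V W) := TensorProduct.map S T with hC
    have hAB : A * B = C := by
      apply TensorProduct.ext'
      intro v w
      simp [A, B, C, Module.End.mul_apply]
    have hAC : A * C = C * A := by
      apply TensorProduct.ext'
      intro v w
      simp [A, C, Module.End.mul_apply]
    have hBC : B * C = C * B := by
      apply TensorProduct.ext'
      intro v w
      simp [B, C, Module.End.mul_apply]
    -- restrict A to the eigenspace E of C at μ
    set E : Submodule K (TensorProduct K V W) := Module.End.eigenspace C μ with hE
    have hEinv : ∀ x ∈ E, A x ∈ E := by
      intro x hx
      rw [hE, Module.End.mem_eigenspace_iff] at hx ⊢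
      have : C (A x) = A (C x) := by
        rw [← Module.End.mul_apply, ← hAC, Module.End.mul_apply]
      rw [this, hx, map_smul]
    have hEne : E ≠ ⊥ := Module.End.hasEigenvalue_iff.mp hμ
    haveI : Nontrivial E := Submodule.nontrivial_iff_ne_bot.mpr hEne
    set A' : Module.End K E := LinearMap.restrict A hEinv with hA'
    obtain ⟨a, ha⟩ := Module.End.exists_eigenvalue A'
    -- restrict B to the eigenspace F of A' at a
    set F : Submodule K E := Module.End.eigenspace A' a with hF
    have hBE : ∀ x ∈ E, B x ∈ E := by
      intro x hx
      rw [hE, Module.End.mem_eigenspace_iff] at hx ⊢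
      have : C (B x) = B (C x) := by
        rw [← Module.End.mul_apply, ← hBC, Module.End.mul_apply]
      rw [this, hx, map_smul]
    set B' : Module.End K E := LinearMap.restrict B hBE with hB'
    have hFinv : ∀ x ∈ F, B' x ∈ F := by
      intro x hx
      rw [hF, Module.End.mem_eigenspace_iff] at hx ⊢
      have hcomm : A' (B' x) = B' (A' x) := by
        apply Subtype.ext
        have : A (B (x : TensorProduct K V W)) = B (A (x : TensorProduct K V W)) := by
          have : A * B = B * A := by
            apply TensorProduct.ext'
            intro v w
            simp [A, B, Module.End.mul_apply]
          rw [← Module.End.mul_apply, this, Module.End.mul_apply]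
        simpa [hA', hB', LinearMap.restrict_apply] using this
      rw [hcomm, hx, map_smul]
    have hFne : F ≠ ⊥ := Module.End.hasEigenvalue_iff.mp ha
    haveI : Nontrivial F := Submodule.nontrivial_iff_ne_bot.mpr hFne
    set B'' : Module.End K F := LinearMap.restrict B' hFinv with hB''
    obtain ⟨b, hb⟩ := Module.End.exists_eigenvalue (K := K) (V := F) B''
    obtain ⟨z, hz, hzne⟩ := hb.exists_hasEigenvector
    -- unfold everything to the ambient space
    set u : TensorProduct K V W := ((z : E) : TensorProduct K V W) with hu
    have hune : u ≠ 0 := by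
      simp only [hu]
      intro h
      apply hzne
      apply Subtype.ext
      apply Subtype.ext
      simpa using h
    have hBu : B u = b • u := by
      have := hz
      rw [Module.End.mem_eigenspace_iff] at this
      have h1 : B' (z : E) = b • (z : E) := congrArg Subtype.val this
      have h2 : B u = b • u := by
        have := congrArg Subtype.val h1
        simpa [hB', LinearMap.restrict_apply, hu] using this
      exact h2
    have hAu : A u = a • u := by
      have hzF : A' (z : E) = a • (z : E) := Module.End.mem_eigenspace_iff.mp z.2
      have := congrArg Subtype.val hzF
      simpa [hA', LinearMap.restrict_apply, hu] using this
    have hCu : C u = μ • u := by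
      exact Module.End.mem_eigenspace_iff.mp (z : E).2
    -- μ = a * b
    have hmul : μ • u = (a * b) • u := by
      have : C u = A (B u) := by rw [← Module.End.mul_apply, hAB]
      rw [hCu, hBu, map_smul, hAu, smul_smul, mul_comm b a] at this
      exact this.symm ▸ rfl
    have hμab : μ = a * b := by
      have := sub_eq_zero.mpr hmul
      rw [← sub_smul] at this
      rcases smul_eq_zero.mp this with h | h
      · exact sub_eq_zero.mp h
      · exact absurd h hune
    -- a is an eigenvalue of S
    have haS : S.HasEigenvalue a := by
      apply aux_hasEigenvalue_left (hu := hune)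
      have : LinearMap.rTensor W ((S : V →ₗ[K] V) - a • LinearMap.id) =
          A - a • LinearMap.id := by
        apply TensorProduct.ext'
        intro v w
        simp [A, TensorProduct.sub_tmul, TensorProduct.smul_tmul', LinearMap.rTensor]
      rw [this]
      simp [hAu]
    have hbT : T.HasEigenvalue b := by
      apply aux_hasEigenvalue_right (hu := hune)
      have : LinearMap.lTensor V ((T : W →ₗ[K] W) - b • LinearMap.id) =
          B - b • LinearMap.id := by
        apply TensorProduct.ext'
        intro v w
        simp [B, TensorProduct.tmul_sub, TensorProduct.tmul_smul, LinearMap.lTensor]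
      rw [this]
      simp [hBu]
    exact ⟨a, b, haS, hbT, hμab⟩
  · -- easy direction
    rintro ⟨a, b, ha, hb, rfl⟩
    obtain ⟨v, hv, hvne⟩ := ha.exists_hasEigenvector
    obtain ⟨w, hw, hwne⟩ := hb.exists_hasEigenvector
    rw [Module.End.mem_eigenspace_iff] at hv hw
    apply Module.End.hasEigenvalue_of_hasEigenvector
      (x := v ⊗ₜ[K] w)
    constructor
    · rw [Module.End.mem_eigenspace_iff]
      rw [TensorProduct.map_tmul, hv, hw, ← TensorProduct.smul_tmul',
        TensorProduct.tmul_smul, smul_smul]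
    · exact aux_tmul_ne_zero hvne hwne
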